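/- In H = H_{p,t,s}, the elements u = a⁻¹ and v = a^(-k) b⁻¹ a^k (for any integer k) satisfy o(u) = p^t, o(v) = p^s, and ⟨u, v⟩ = H; consequently H has an automorphism β with a^β = a⁻¹ and b^β = a^(-k) b⁻¹ a^k. -/

import Mathlib

open scoped commutatorElement

/-! ### Auxiliary general commutator lemmas -/

section CommLemmas

variable {G : Type*} [Group G]

lemma comm_inv_inv {a b c : G} (h : ⁅a, b⁆ = c) (hca : Commute c a) (hcb : Commute c b) :
    ⁅a⁻¹, b⁻¹⁆ = c := by
  rw [commutatorElement_def] at h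
  have h1 : a * b = b * a * c := by
    have h2 : a * b = c * b * a := by rw [← h]; group
    rw [h2, hcb.eq, mul_assoc, hca.eq, ← mul_assoc]
  rw [commutatorElement_def]
  simp only [inv_inv]
  calc a⁻¹ * b⁻¹ * a * b = a⁻¹ * b⁻¹ * (a * b) := by group
    _ = a⁻¹ * b⁻¹ * (b * a * c) := by rw [h1]
    _ = c := by group

lemma comm_conj {a b c g : G} (h : ⁅a, b⁆ = c) (hag : Commute a g) (hcg : Commute c g) :
    ⁅a, g⁻¹ * b * g⁆ = c := by
  have h1 : g⁻¹ * a * g = a := by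
    rw [mul_assoc, hag.eq, inv_mul_cancel_left]
  have h2 : g⁻¹ * c * g = c := by
    rw [mul_assoc, hcg.eq, inv_mul_cancel_left]
  calc ⁅a, g⁻¹ * b * g⁆ = ⁅g⁻¹ * a * g, g⁻¹ * b * g⁆ := by rw [h1]
    _ = (MulAut.conj g⁻¹) ⁅a, b⁆ := by
        rw [map_commutatorElement]
        simp [MulAut.conj_apply]
    _ = c := by rw [h]; simpa [MulAut.conj_apply] using h2

end CommLemmas

/-! ### A concrete model of `H_{p,t,s}` -/

/-- Model group: a Heisenberg-type group on `ZMod (p^t) × ZMod (p^s) × ZMod p`. -/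
@[ext] structure Gm (p t s : ℕ) where
  x : ZMod (p ^ t)
  y : ZMod (p ^ s)
  z : ZMod p

namespace Gm

variable {p t s : ℕ} [Fact (1 ≤ t)] [Fact (1 ≤ s)]

def chi (p t : ℕ) [Fact (1 ≤ t)] : ZMod (p ^ t) →+* ZMod p :=
  ZMod.castHom (dvd_pow_self p (Nat.one_le_iff_ne_zero.mp Fact.out)) (ZMod p)

def psi (p s : ℕ) [Fact (1 ≤ s)] : ZMod (p ^ s) →+* ZMod p :=
  ZMod.castHom (dvd_pow_self p (Nat.one_le_iff_ne_zero.mp Fact.out)) (ZMod p)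

instance : Mul (Gm p t s) :=
  ⟨fun a b => ⟨a.x + b.x, a.y + b.y, a.z + b.z + chi p t a.x * psi p s b.y⟩⟩

instance : One (Gm p t s) := ⟨⟨0, 0, 0⟩⟩

instance : Inv (Gm p t s) :=
  ⟨fun a => ⟨-a.x, -a.y, -a.z + chi p t a.x * psi p s a.y⟩⟩

@[simp] lemma mul_x (a b : Gm p t s) : (a * b).x = a.x + b.x := rfl
@[simp] lemma mul_y (a b : Gm p t s) : (a * b).y = a.y + b.y := rfl
@[simp] lemma mul_z (a b : Gm p t s) :
    (a * b).z = a.z + b.z + chi p t a.x * psi p s b.y := rfl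
@[simp] lemma one_x : (1 : Gm p t s).x = 0 := rfl
@[simp] lemma one_y : (1 : Gm p t s).y = 0 := rfl
@[simp] lemma one_z : (1 : Gm p t s).z = 0 := rfl
@[simp] lemma inv_x (a : Gm p t s) : (a⁻¹).x = -a.x := rfl
@[simp] lemma inv_y (a : Gm p t s) : (a⁻¹).y = -a.y := rfl
@[simp] lemma inv_z (a : Gm p t s) :
    (a⁻¹).z = -a.z + chi p t a.x * psi p s a.y := rfl

instance : Group (Gm p t s) where
  mul_assoc a b c := by ext <;> simp [map_add] <;> ring
  one_mul a := by ext <;> simp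
  mul_one a := by ext <;> simp
  inv_mul_cancel a := by ext <;> simp [map_neg] <;> ring

def A : Gm p t s := ⟨1, 0, 0⟩
def B : Gm p t s := ⟨0, 1, 0⟩
def C : Gm p t s := ⟨0, 0, 1⟩

@[simp] lemma A_pow (n : ℕ) : (A : Gm p t s) ^ n = ⟨(n : ZMod (p ^ t)), 0, 0⟩ := by
  induction n with
  | zero => simp; rfl
  | succ n ih => rw [pow_succ, ih]; ext <;> simp [A] <;> push_cast <;> ring

@[simp] lemma B_pow (n : ℕ) : (B : Gm p t s) ^ n = ⟨0, (n : ZMod (p ^ s)), 0⟩ := by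
  induction n with
  | zero => simp; rfl
  | succ n ih => rw [pow_succ, ih]; ext <;> simp [B] <;> push_cast <;> ring

@[simp] lemma C_pow (n : ℕ) : (C : Gm p t s) ^ n = ⟨0, 0, (n : ZMod p)⟩ := by
  induction n with
  | zero => simp; rfl
  | succ n ih => rw [pow_succ, ih]; ext <;> simp [C] <;> push_cast <;> ring

lemma comm_AB : ⁅(A : Gm p t s), (B : Gm p t s)⁆ = C := by
  rw [commutatorElement_def]; ext <;> simp [A, B, C]

lemma comm_CA : ⁅(C : Gm p t s), (A : Gm p t s)⁆ = 1 := by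
  rw [commutatorElement_def]; ext <;> simp [A, C]

lemma comm_CB : ⁅(C : Gm p t s), (B : Gm p t s)⁆ = 1 := by
  rw [commutatorElement_def]; ext <;> simp [B, C]

lemma orderOf_A : orderOf (A : Gm p t s) = p ^ t := by
  refine Nat.dvd_antisymm (orderOf_dvd_of_pow_eq_one ?_) ?_
  · ext <;> simp
  · have h := pow_orderOf_eq_one (A : Gm p t s)
    rw [A_pow] at h
    have := congrArg Gm.x h
    simpa [ZMod.natCast_eq_zero_iff] using this

lemma orderOf_B : orderOf (B : Gm p t s) = p ^ s := by
  refine Nat.dvd_antisymm (orderOf_dvd_of_pow_eq_one ?_) ?_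
  · ext <;> simp
  · have h := pow_orderOf_eq_one (B : Gm p t s)
    rw [B_pow] at h
    have := congrArg Gm.y h
    simpa [ZMod.natCast_eq_zero_iff] using this

end Gm

/-! ### The presented group -/

/-- Relations for the inner-abelian non-metacyclic p-group
`H_{p,t,s} = ⟨a, b, c | a^(p^t) = b^(p^s) = c^p = 1, [a,b] = c, [c,a] = [c,b] = 1⟩`. -/
def HRels (p t s : ℕ) : Set (FreeGroup (Fin 3)) :=
  {FreeGroup.of (0 : Fin 3) ^ p ^ t, FreeGroup.of (1 : Fin 3) ^ p ^ s, FreeGroup.of (2 : Fin 3) ^ p,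
   ⁅FreeGroup.of (0 : Fin 3), FreeGroup.of (1 : Fin 3)⁆ * (FreeGroup.of (2 : Fin 3))⁻¹,
   ⁅FreeGroup.of (2 : Fin 3), FreeGroup.of (0 : Fin 3)⁆, ⁅FreeGroup.of (2 : Fin 3), FreeGroup.of (1 : Fin 3)⁆}

/-- The group `H_{p,t,s}` as a presented group. -/
abbrev Hgrp (p t s : ℕ) := PresentedGroup (HRels p t s)

/-- The generator `a` of `H_{p,t,s}`. -/
def aa (p t s : ℕ) : Hgrp p t s := PresentedGroup.of (0 : Fin 3)

/-- The generator `b` of `H_{p,t,s}`. -/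
def bb (p t s : ℕ) : Hgrp p t s := PresentedGroup.of (1 : Fin 3)

/-- The generator `c = [a,b]` of `H_{p,t,s}`. -/
def cc (p t s : ℕ) : Hgrp p t s := PresentedGroup.of (2 : Fin 3)

section HgrpFacts

variable (p t s : ℕ)

lemma Hrel_one {r : FreeGroup (Fin 3)} (hr : r ∈ HRels p t s) :
    PresentedGroup.mk (HRels p t s) r = 1 :=
  (QuotientGroup.eq_one_iff _).mpr (Subgroup.subset_normalClosure hr)

lemma mem_HRels_1 : FreeGroup.of (0 : Fin 3) ^ p ^ t ∈ HRels p t s :=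
  Set.mem_insert _ _

lemma mem_HRels_2 : FreeGroup.of (1 : Fin 3) ^ p ^ s ∈ HRels p t s :=
  Set.mem_insert_of_mem _ (Set.mem_insert _ _)

lemma mem_HRels_3 : FreeGroup.of (2 : Fin 3) ^ p ∈ HRels p t s :=
  Set.mem_insert_of_mem _ (Set.mem_insert_of_mem _ (Set.mem_insert _ _))

lemma mem_HRels_4 :
    ⁅FreeGroup.of (0 : Fin 3), FreeGroup.of (1 : Fin 3)⁆ * (FreeGroup.of (2 : Fin 3))⁻¹ ∈
      HRels p t s :=
  Set.mem_insert_of_mem _ (Set.mem_insert_of_mem _ (Set.mem_insert_of_mem _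
    (Set.mem_insert _ _)))

lemma mem_HRels_5 : ⁅FreeGroup.of (2 : Fin 3), FreeGroup.of (0 : Fin 3)⁆ ∈ HRels p t s :=
  Set.mem_insert_of_mem _ (Set.mem_insert_of_mem _ (Set.mem_insert_of_mem _
    (Set.mem_insert_of_mem _ (Set.mem_insert _ _))))

lemma mem_HRels_6 : ⁅FreeGroup.of (2 : Fin 3), FreeGroup.of (1 : Fin 3)⁆ ∈ HRels p t s :=
  Set.mem_insert_of_mem _ (Set.mem_insert_of_mem _ (Set.mem_insert_of_mem _
    (Set.mem_insert_of_mem _ (Set.mem_insert_of_mem _ rfl))))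

lemma aa_pow_rel : aa p t s ^ p ^ t = 1 := by
  have h := Hrel_one p t s (mem_HRels_1 p t s)
  rw [map_pow] at h
  exact h

lemma bb_pow_rel : bb p t s ^ p ^ s = 1 := by
  have h := Hrel_one p t s (mem_HRels_2 p t s)
  rw [map_pow] at h
  exact h

lemma cc_pow_rel : cc p t s ^ p = 1 := by
  have h := Hrel_one p t s (mem_HRels_3 p t s)
  rw [map_pow] at h
  exact h

lemma comm_aabb : ⁅aa p t s, bb p t s⁆ = cc p t s := by
  have h := Hrel_one p t s (mem_HRels_4 p t s)
  rw [map_mul, map_commutatorElement, map_inv] at h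
  exact mul_inv_eq_one.mp h

lemma comm_ccaa : Commute (cc p t s) (aa p t s) := by
  have h := Hrel_one p t s (mem_HRels_5 p t s)
  rw [map_commutatorElement] at h
  exact commutatorElement_eq_one_iff_commute.mp h

lemma comm_ccbb : Commute (cc p t s) (bb p t s) := by
  have h := Hrel_one p t s (mem_HRels_6 p t s)
  rw [map_commutatorElement] at h
  exact commutatorElement_eq_one_iff_commute.mp h

end HgrpFacts

theorem stmt15 (p t s : ℕ) (hp : p.Prime) (hodd : Odd p) (hs : 1 ≤ s) (hts : s ≤ t)
    (k : ℤ) :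
    orderOf ((aa p t s)⁻¹) = p ^ t ∧
    orderOf (aa p t s ^ (-k) * (bb p t s)⁻¹ * aa p t s ^ k) = p ^ s ∧
    Subgroup.closure {(aa p t s)⁻¹, aa p t s ^ (-k) * (bb p t s)⁻¹ * aa p t s ^ k} =
      (⊤ : Subgroup (Hgrp p t s)) ∧
    ∃ β : Hgrp p t s ≃* Hgrp p t s,
      β (aa p t s) = (aa p t s)⁻¹ ∧
      β (bb p t s) = aa p t s ^ (-k) * (bb p t s)⁻¹ * aa p t s ^ k := by
  haveI ht1 : Fact (1 ≤ t) := ⟨le_trans hs hts⟩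
  haveI hs1 : Fact (1 ≤ s) := ⟨hs⟩
  set a := aa p t s with ha_def
  set b := bb p t s with hb_def
  set c := cc p t s with hc_def
  have ha : a ^ p ^ t = 1 := aa_pow_rel p t s
  have hb : b ^ p ^ s = 1 := bb_pow_rel p t s
  have hc : c ^ p = 1 := cc_pow_rel p t s
  have habc : ⁅a, b⁆ = c := comm_aabb p t s
  have hca : Commute c a := comm_ccaa p t s
  have hcb : Commute c b := comm_ccbb p t s
  -- the homomorphism onto the model
  set f : Fin 3 → Gm p t s := ![Gm.A, Gm.B, Gm.C] with hf_def
  have hfrel : ∀ r ∈ HRels p t s, FreeGroup.lift f r = 1 := by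
    intro r hr
    have hf0 : f 0 = Gm.A := rfl
    have hf1 : f 1 = Gm.B := rfl
    have hf2 : f 2 = Gm.C := rfl
    simp only [HRels, Set.mem_insert_iff, Set.mem_singleton_iff] at hr
    rcases hr with rfl | rfl | rfl | rfl | rfl | rfl
    · rw [map_pow, FreeGroup.lift_apply_of, hf0, Gm.A_pow]
      ext <;> simp
    · rw [map_pow, FreeGroup.lift_apply_of, hf1, Gm.B_pow]
      ext <;> simp
    · rw [map_pow, FreeGroup.lift_apply_of, hf2, Gm.C_pow]
      ext <;> simp
    · rw [map_mul, map_inv, map_commutatorElement, FreeGroup.lift_apply_of, FreeGroup.lift_apply_of,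
        FreeGroup.lift_apply_of, hf0, hf1, hf2, Gm.comm_AB, mul_inv_cancel]
    · rw [map_commutatorElement, FreeGroup.lift_apply_of, FreeGroup.lift_apply_of, hf2, hf0, Gm.comm_CA]
    · rw [map_commutatorElement, FreeGroup.lift_apply_of, FreeGroup.lift_apply_of, hf2, hf1, Gm.comm_CB]
  set φ : Hgrp p t s →* Gm p t s := PresentedGroup.toGroup hfrel with hφ_def
  have hφa : φ a = Gm.A := PresentedGroup.toGroup.of hfrel
  have hφb : φ b = Gm.B := PresentedGroup.toGroup.of hfrel
  -- orders of a and b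
  have hoa : orderOf a = p ^ t := by
    refine Nat.dvd_antisymm (orderOf_dvd_of_pow_eq_one ha) ?_
    have := orderOf_map_dvd φ a
    rw [hφa, Gm.orderOf_A] at this
    exact this
  have hob : orderOf b = p ^ s := by
    refine Nat.dvd_antisymm (orderOf_dvd_of_pow_eq_one hb) ?_
    have := orderOf_map_dvd φ b
    rw [hφb, Gm.orderOf_B] at this
    exact this
  -- the conjugated generator
  have hvconj : a ^ (-k) * b⁻¹ * a ^ k = a ^ (-k) * b⁻¹ * (a ^ (-k))⁻¹ := by
    rw [zpow_neg, inv_inv]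
  have goal1 : orderOf a⁻¹ = p ^ t := by rw [orderOf_inv, hoa]
  have goal2 : orderOf (a ^ (-k) * b⁻¹ * a ^ k) = p ^ s := by
    rw [hvconj]
    have hco : orderOf (a ^ (-k) * b⁻¹ * (a ^ (-k))⁻¹) = orderOf b⁻¹ := by
      have h := orderOf_injective (MulAut.conj (a ^ (-k))).toMonoidHom
        (MulAut.conj (a ^ (-k))).injective b⁻¹
      rw [MulEquiv.coe_toMonoidHom, MulAut.conj_apply] at h
      exact h
    rw [hco, orderOf_inv, hob]
  refine ⟨goal1, goal2, ?_, ?_⟩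
  · -- closure
    rw [eq_top_iff, ← PresentedGroup.closure_range_of (HRels p t s)]
    rw [Subgroup.closure_le]
    rintro _ ⟨i, rfl⟩
    set M := Subgroup.closure {a⁻¹, a ^ (-k) * b⁻¹ * a ^ k}
    have hu : a⁻¹ ∈ M := Subgroup.subset_closure (Set.mem_insert _ _)
    have hv : a ^ (-k) * b⁻¹ * a ^ k ∈ M :=
      Subgroup.subset_closure (Set.mem_insert_of_mem _ rfl)
    have haM : a ∈ M := by simpa using M.inv_mem hu
    have hbM : b ∈ M := by
      have : b = a ^ k * (a ^ (-k) * b⁻¹ * a ^ k)⁻¹ * a ^ (-k) := by group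
      rw [this]
      exact M.mul_mem (M.mul_mem (M.zpow_mem haM k) (M.inv_mem hv)) (M.zpow_mem haM (-k))
    have hcM : c ∈ M := by
      rw [← habc, commutatorElement_def]
      exact M.mul_mem (M.mul_mem (M.mul_mem haM hbM) (M.inv_mem haM)) (M.inv_mem hbM)
    fin_cases i
    · exact haM
    · exact hbM
    · exact hcM
  · -- the automorphism
    set g : Fin 3 → Hgrp p t s := ![a⁻¹, a ^ (-k) * b⁻¹ * a ^ k, c] with hg_def
    have hg0 : g 0 = a⁻¹ := rfl
    have hg1 : g 1 = a ^ (-k) * b⁻¹ * a ^ k := rfl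
    have hg2 : g 2 = c := rfl
    have hcomm_uv : ⁅a⁻¹, a ^ (-k) * b⁻¹ * a ^ k⁆ = c := by
      have h1 : ⁅a⁻¹, b⁻¹⁆ = c := comm_inv_inv habc hca hcb
      have h2 : Commute a⁻¹ (a ^ k) := ((Commute.refl a).zpow_right k).inv_left
      have h3 : Commute c (a ^ k) := hca.zpow_right k
      have := comm_conj h1 h2 h3
      rwa [← zpow_neg] at this
    have hcv : Commute c (a ^ (-k) * b⁻¹ * a ^ k) :=
      ((hca.zpow_right (-k)).mul_right hcb.inv_right).mul_right (hca.zpow_right k)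
    have hgrel : ∀ r ∈ HRels p t s, FreeGroup.lift g r = 1 := by
      intro r hr
      simp only [HRels, Set.mem_insert_iff, Set.mem_singleton_iff] at hr
      rcases hr with rfl | rfl | rfl | rfl | rfl | rfl
      · rw [map_pow, FreeGroup.lift_apply_of, hg0, inv_pow, ha, inv_one]
      · rw [map_pow, FreeGroup.lift_apply_of, hg1, hvconj, conj_pow, inv_pow, hb, inv_one,
          mul_one, mul_inv_cancel]
      · rw [map_pow, FreeGroup.lift_apply_of, hg2, hc]
      · rw [map_mul, map_inv, map_commutatorElement, FreeGroup.lift_apply_of, FreeGroup.lift_apply_of,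
          FreeGroup.lift_apply_of, hg0, hg1, hg2, hcomm_uv, mul_inv_cancel]
      · rw [map_commutatorElement, FreeGroup.lift_apply_of, FreeGroup.lift_apply_of, hg2, hg0]
        exact commutatorElement_eq_one_iff_commute.mpr hca.inv_right
      · rw [map_commutatorElement, FreeGroup.lift_apply_of, FreeGroup.lift_apply_of, hg2, hg1]
        exact commutatorElement_eq_one_iff_commute.mpr hcv
    set β : Hgrp p t s →* Hgrp p t s := PresentedGroup.toGroup hgrel with hβ_def
    have hβa : β a = a⁻¹ := PresentedGroup.toGroup.of hgrel
    have hβb : β b = a ^ (-k) * b⁻¹ * a ^ k := PresentedGroup.toGroup.of hgrel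
    have hβc : β c = c := PresentedGroup.toGroup.of hgrel
    have hββ : β.comp β = MonoidHom.id (Hgrp p t s) := by
      apply PresentedGroup.ext
      intro i
      fin_cases i
      · show β (β a) = a
        rw [hβa, map_inv, hβa, inv_inv]
      · show β (β b) = b
        rw [hβb, map_mul, map_mul, map_zpow, map_zpow, map_inv, hβa, hβb]
        group
      · show β (β c) = c
        rw [hβc, hβc]
    have hββ' : ∀ x, β (β x) = x := fun x => DFunLike.congr_fun hββ x
    exact ⟨{ toFun := β, invFun := β, left_inv := hββ', right_inv := hββ',
             map_mul' := map_mul β }, hβa, hβb⟩
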